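/- Let G be a finite group, let π be a unitary representation of G on a nontrivial finite-dimensional complex Hilbert space H, let K_π be the projective kernel of π, and suppose η ∈ H does phase retrieval for π. Then p₀(π,η) ≤ 1 − √(|K_π| / |G|), that is, p₀(π,η) ≤ 1 − |G/K_π|^{−1/2}. -/

import Mathlib

def DoesPhaseRetrieval {H : Type*} [NormedAddCommGroup H] [InnerProductSpace ℂ H]
    {I : Type*} (x : I → H) : Prop :=
  ∀ f g : H, (∀ i : I, ‖(inner ℂ f (x i) : ℂ)‖ = ‖(inner ℂ g (x i) : ℂ)‖) →
    ∃ c : ℂ, ‖c‖ = 1 ∧ f = c • g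

/-- `p₀(π,η)`: the maximal proportion of zeros in the matrix coefficients
`V_η f = ⟨f, π(·)η⟩`, over all nonzero `f`. -/
noncomputable def p0Vec {G : Type*} [Group G] [Finite G]
    {H : Type*} [NormedAddCommGroup H] [InnerProductSpace ℂ H]
    (π : G →* (H ≃ₗᵢ[ℂ] H)) (η : H) : ℝ :=
  sSup {t : ℝ | ∃ f : H, f ≠ 0 ∧
    t = 1 - (Nat.card {x : G | (inner ℂ f (π x η) : ℂ) ≠ 0} : ℝ) / (Nat.card G : ℝ)}

/-- If `η` does phase retrieval for `π`, then `p₀(π,η) ≤ 1 - |G/K_π|^{-1/2}`, where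
`K_π` is the projective kernel of `π`. -/
theorem p0_le_of_phase_retrieval
    {G : Type*} [Group G] [Finite G]
    {H : Type*} [NormedAddCommGroup H] [InnerProductSpace ℂ H] [FiniteDimensional ℂ H]
    [Nontrivial H]
    (π : G →* (H ≃ₗᵢ[ℂ] H)) (η : H)
    (hη : DoesPhaseRetrieval (fun x : G => π x η)) :
    p0Vec π η ≤
      1 - Real.sqrt
        ((Nat.card {x : G | ∃ c : ℂ, ‖c‖ = 1 ∧ ∀ v : H, π x v = c • v} : ℝ) /
          (Nat.card G : ℝ)) := by
  classical
  have _inst : Fintype G := Fintype.ofFinite G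
  have hGpos : 0 < (Nat.card G : ℝ) := by
    have := Nat.card_pos (α := G); exact_mod_cast this
  set K : Finset G :=
    Finset.univ.filter (fun k => ∃ c : ℂ, ‖c‖ = 1 ∧ ∀ v : H, π k v = c • v) with hK
  have hKc : (Nat.card {x : G | ∃ c : ℂ, ‖c‖ = 1 ∧ ∀ v : H, π x v = c • v}) = K.card := by
    simp [hK, Nat.card_eq_fintype_card, Fintype.card_subtype, Set.mem_setOf_eq]
  have key : ∀ f : H, f ≠ 0 →
      K.card * Nat.card G ≤
      (Nat.card {x : G | (inner ℂ f (π x η) : ℂ) ≠ 0}) ^ 2 := by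
    intro f hf
    set A : Finset G := Finset.univ.filter (fun x => (inner ℂ f (π x η) : ℂ) ≠ 0) with hA
    have hAc : (Nat.card {x : G | (inner ℂ f (π x η) : ℂ) ≠ 0}) = A.card := by
      simp [hA, Nat.card_eq_fintype_card, Fintype.card_subtype, Set.mem_setOf_eq]
    have hmulK : ∀ a ∈ A, ∀ k ∈ K, a * k ∈ A := by
      intro a ha k hk
      simp only [hA, Finset.mem_filter, Finset.mem_univ, true_and] at ha ⊢
      simp only [hK, Finset.mem_filter, Finset.mem_univ, true_and] at hk
      obtain ⟨c, hc, hcv⟩ := hk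
      have hc0 : c ≠ 0 := by intro h; rw [h] at hc; simp at hc
      have hπ : π (a * k) η = c • (π a η) := by
        rw [map_mul]
        show π a (π k η) = _
        rw [hcv η, map_smul]
      rw [hπ, inner_smul_right]
      exact mul_ne_zero hc0 ha
    have hAne : A.Nonempty := by
      by_contra hemp
      rw [Finset.not_nonempty_iff_eq_empty] at hemp
      have hz : ∀ x : G, (inner ℂ f (π x η) : ℂ) = 0 := by
        intro x
        by_contra hx
        have hxA : x ∈ A := by simp [hA, hx]
        simp [hemp] at hxA
      obtain ⟨c, hc, hfc⟩ := hη f 0 (by intro x; simp [hz x, inner_zero_left])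
      rw [smul_zero] at hfc
      exact hf hfc
    have hsurj : ∀ y : G, ∃ x, x ∈ A ∧ y⁻¹ * x ∈ A := by
      intro y
      by_contra hcon
      push_neg at hcon
      set g : H := π y f with hg
      have hv : ∀ x : G, (inner ℂ g (π x η) : ℂ) = inner ℂ f (π (y⁻¹ * x) η) := by
        intro x
        conv_lhs => rw [show x = y * (y⁻¹ * x) by group]
        rw [map_mul]
        exact LinearIsometryEquiv.inner_map_map (π y) f (π (y⁻¹ * x) η)
      have hmag : ∀ x : G, ‖(inner ℂ (f + g) (π x η) : ℂ)‖ = ‖(inner ℂ (f - g) (π x η) : ℂ)‖ := by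
        intro x
        rw [inner_add_left, inner_sub_left]
        by_cases hx : (inner ℂ f (π x η) : ℂ) = 0
        · rw [hx, zero_add, zero_sub, norm_neg]
        · have hxA : x ∈ A := by simp [hA, hx]
          have hg0 : (inner ℂ g (π x η) : ℂ) = 0 := by
            rw [hv x]
            by_contra hgg
            exact hcon x hxA (Finset.mem_filter.mpr ⟨Finset.mem_univ _, hgg⟩)
          rw [hg0, add_zero, sub_zero]
      obtain ⟨c, hc, hcc⟩ := hη (f + g) (f - g) hmag
      have hg1 : (1 + c) • g = (c - 1) • f := by
        have h0 : (f + g) - c • (f - g) = 0 := sub_eq_zero.mpr hcc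
        rw [smul_sub] at h0
        have h1 : (1 + c) • g - (c - 1) • f = 0 := by
          rw [add_smul, sub_smul, one_smul, one_smul, ← h0]; abel
        exact sub_eq_zero.mp h1
      by_cases h1c : (1 + c) = 0
      · have hcm : c = -1 := by linear_combination h1c
        rw [h1c, zero_smul, hcm] at hg1
        have hf0 : f = 0 := by
          have h2 : ((-1 : ℂ) - 1) • f = 0 := hg1.symm
          rcases smul_eq_zero.mp h2 with h | h
          · norm_num at h
          · exact h
        exact hf hf0
      · have hglam : g = ((1 + c)⁻¹ * (c - 1)) • f := by
          rw [mul_smul, ← hg1, smul_smul, inv_mul_cancel₀ h1c, one_smul]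
        obtain ⟨x₀, hx₀⟩ := hAne
        have hx₀' : (inner ℂ f (π x₀ η) : ℂ) ≠ 0 := by
          simpa [hA, Finset.mem_filter] using hx₀
        have h2 : (inner ℂ g (π (y * x₀) η) : ℂ) = inner ℂ f (π x₀ η) := by
          rw [hv (y * x₀), show y⁻¹ * (y * x₀) = x₀ by group]
        have h3 : (inner ℂ f (π (y * x₀) η) : ℂ) ≠ 0 := by
          intro hzero
          rw [hglam, inner_smul_left, hzero, mul_zero] at h2
          exact hx₀' h2.symm
        refine hcon (y * x₀) (Finset.mem_filter.mpr ⟨Finset.mem_univ _, h3⟩) ?_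
        rw [show y⁻¹ * (y * x₀) = x₀ by group]
        exact hx₀
    choose xf hxf using hsurj
    have hcard : ((Finset.univ : Finset G) ×ˢ K).card ≤ (A ×ˢ A).card := by
      apply Finset.card_le_card_of_injOn
        (fun p : G × G => (xf p.1 * p.2, (p.1⁻¹ * xf p.1) * p.2))
      · rintro ⟨y, k⟩ hp
        simp only [Finset.mem_coe, Finset.mem_product, Finset.mem_univ, true_and] at hp
        exact Finset.mem_product.mpr ⟨hmulK _ (hxf y).1 _ hp, hmulK _ (hxf y).2 _ hp⟩
      · rintro ⟨y, k⟩ - ⟨y', k'⟩ - hpq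
        simp only [Prod.mk.injEq] at hpq
        obtain ⟨e1, e2⟩ := hpq
        have l : ∀ (y u k : G), (u * k) * ((y⁻¹ * u) * k)⁻¹ = y := by intros; group
        have hy : y = y' := by
          have h' : (xf y * k) * ((y⁻¹ * xf y) * k)⁻¹
              = (xf y' * k') * ((y'⁻¹ * xf y') * k')⁻¹ := by rw [e1, e2]
          rwa [l, l] at h'
        subst hy
        have hk' : k = k' := by
          exact mul_left_cancel e1
        simp [hk']
    have h1 : ((Finset.univ : Finset G) ×ˢ K).card = Fintype.card G * K.card := by
      rw [Finset.card_product, Finset.card_univ]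
    have h2 : (A ×ˢ A).card = A.card ^ 2 := by
      rw [Finset.card_product, sq]
    rw [h1, h2] at hcard
    rw [hAc, Nat.card_eq_fintype_card, Nat.mul_comm]
    exact hcard
  rw [p0Vec]
  apply Real.sSup_le
  · rintro t ⟨f, hf, rfl⟩
    have hk := key f hf
    set kn := K.card with hkn
    set an := Nat.card {x : G | (inner ℂ f (π x η) : ℂ) ≠ 0} with han
    rw [hKc]
    have hcast : (kn : ℝ) * (Nat.card G : ℝ) ≤ (an : ℝ) ^ 2 := by exact_mod_cast hk
    have h1 : Real.sqrt ((kn : ℝ) / (Nat.card G : ℝ)) ≤ (an : ℝ) / (Nat.card G : ℝ) := by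
      have hle : (kn : ℝ) / (Nat.card G : ℝ) ≤ ((an : ℝ) / (Nat.card G : ℝ)) ^ 2 := by
        rw [div_pow, div_le_div_iff₀ hGpos (by positivity)]
        nlinarith
      calc Real.sqrt ((kn : ℝ) / (Nat.card G : ℝ))
          ≤ Real.sqrt (((an : ℝ) / (Nat.card G : ℝ)) ^ 2) := Real.sqrt_le_sqrt hle
        _ = (an : ℝ) / (Nat.card G : ℝ) := Real.sqrt_sq (by positivity)
    linarith
  · have hKle : (Nat.card {x : G | ∃ c : ℂ, ‖c‖ = 1 ∧ ∀ v : H, π x v = c • v} : ℝ)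
        ≤ (Nat.card G : ℝ) := by
      rw [hKc, Nat.card_eq_fintype_card]
      exact_mod_cast Finset.card_le_univ K
    have h2 : Real.sqrt
        ((Nat.card {x : G | ∃ c : ℂ, ‖c‖ = 1 ∧ ∀ v : H, π x v = c • v} : ℝ) /
          (Nat.card G : ℝ)) ≤ 1 := by
      calc Real.sqrt
            ((Nat.card {x : G | ∃ c : ℂ, ‖c‖ = 1 ∧ ∀ v : H, π x v = c • v} : ℝ) /
              (Nat.card G : ℝ))
          ≤ Real.sqrt 1 := Real.sqrt_le_sqrt (by rw [div_le_one hGpos]; exact hKle)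
        _ = 1 := Real.sqrt_one
    linarith
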